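/- If the weighted vertex spanning-tree polynomial of K₄ with edge weights w(i4)=1 (i=1,2,3) and opposite-edge weights e₁,e₂,e₃ > 0 is real stable, then at least two of e₁, e₂, e₃ are equal. -/

import Mathlib

def RealStable {σ : Type*} (P : MvPolynomial σ ℝ) : Prop :=
  ∀ z : σ → ℂ, (∀ i, 0 < (z i).im) → MvPolynomial.aeval z P ≠ 0

open scoped Classical in
/-- The weighted vertex spanning-tree polynomial
`P_{G,w} = Σ_{T spanning tree of G} (Π_{e∈T} w(e)) · Π_v x_v^{deg_T(v)−1}`. -/
noncomputable def treePoly {V : Type*} [Fintype V] [DecidableEq V]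
    (G : SimpleGraph V) (w : Sym2 V → ℝ) : MvPolynomial V ℝ :=
  ∑ T ∈ Finset.univ.filter (fun T : SimpleGraph V => T ≤ G ∧ T.IsTree),
    MvPolynomial.C (∏ e ∈ T.edgeFinset, w e) *
      ∏ v, MvPolynomial.X v ^ (T.degree v - 1)

namespace Stmt10Aux
open SimpleGraph Finset

def fes (s : Finset (Sym2 (Fin 4))) : SimpleGraph (Fin 4) := fromEdgeSet ↑s

instance (s : Finset (Sym2 (Fin 4))) : DecidableRel (fes s).Adj := fun v w =>
  decidable_of_iff (s(v,w) ∈ s ∧ v ≠ w) (by rw [fes, fromEdgeSet_adj]; simp)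

instance decRelSdiff (G : SimpleGraph (Fin 4)) [DecidableRel G.Adj] (e : Sym2 (Fin 4)) :
    DecidableRel (G \ fromEdgeSet {e}).Adj := fun v w =>
  decidable_of_iff (G.Adj v w ∧ ¬(s(v,w) = e ∧ v ≠ w)) (by simp [fromEdgeSet_adj])

def myConnected (G : SimpleGraph (Fin 4)) [DecidableRel G.Adj] : Decidable G.Connected :=
  decidable_of_iff (∀ u v, G.Reachable u v)
    (by rw [connected_iff]
        exact ⟨fun h => ⟨h, ⟨0⟩⟩, fun h => h.1⟩)

def myAcyclic (G : SimpleGraph (Fin 4)) [DecidableRel G.Adj] : Decidable G.IsAcyclic :=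
  decidable_of_iff (∀ v w, G.Adj v w → ¬(G \ fromEdgeSet {s(v,w)}).Reachable v w)
    (by rw [isAcyclic_iff_forall_adj_isBridge]
        constructor
        · intro h v w hadj; rw [isBridge_iff]; exact h v w hadj
        · intro h v w hadj; exact ((isBridge_iff).mp (h hadj)))

def myTree (G : SimpleGraph (Fin 4)) [DecidableRel G.Adj] : Decidable G.IsTree :=
  @decidable_of_iff _ _ (G.isTree_iff).symm (@instDecidableAnd _ _ (myConnected G) (myAcyclic G))

def allE : Finset (Sym2 (Fin 4)) := {s(0,1),s(0,2),s(0,3),s(1,2),s(1,3),s(2,3)}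

def trees16 : Finset (Finset (Sym2 (Fin 4))) :=
  { {s(0,1),s(0,2),s(0,3)}, {s(0,1),s(1,2),s(1,3)}, {s(0,2),s(1,2),s(2,3)}, {s(0,3),s(1,3),s(2,3)},
    {s(0,1),s(0,2),s(1,3)}, {s(0,1),s(0,2),s(2,3)}, {s(0,1),s(0,3),s(1,2)}, {s(0,1),s(0,3),s(2,3)},
    {s(0,1),s(1,3),s(2,3)}, {s(0,1),s(1,2),s(2,3)}, {s(0,2),s(0,3),s(1,2)}, {s(0,2),s(0,3),s(1,3)},
    {s(0,2),s(1,3),s(2,3)}, {s(0,2),s(1,2),s(1,3)}, {s(0,3),s(1,2),s(1,3)}, {s(0,3),s(1,2),s(2,3)} }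

def tris : Finset (Finset (Sym2 (Fin 4))) :=
  { {s(0,1),s(0,2),s(1,2)}, {s(0,1),s(0,3),s(1,3)}, {s(0,2),s(0,3),s(2,3)}, {s(1,2),s(1,3),s(2,3)} }

lemma no_isolated (T : SimpleGraph (Fin 4)) (hconn : T.Connected) (v u : Fin 4) (hvu : v ≠ u) :
    ∃ b, T.Adj v b := by
  obtain ⟨p⟩ := hconn.preconnected v u
  cases p with
  | nil => exact absurd rfl hvu
  | cons h q => exact ⟨_, h⟩

lemma forward (T : SimpleGraph (Fin 4)) {i : Fintype T.edgeSet} (hT : T.IsTree) :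
    T.edgeFinset ∈ trees16 := by
  have hc : T.edgeFinset.card + 1 = 4 := by
    have := hT.card_edgeFinset; simpa using this
  have hsub : T.edgeFinset ⊆ allE := by
    have hall : ∀ e : Sym2 (Fin 4), ¬e.IsDiag → e ∈ allE := by decide
    exact fun e he => hall e (T.not_isDiag_of_mem_edgeSet (mem_edgeFinset.mp he))
  have h20 : T.edgeFinset ∈ allE.powersetCard 3 :=
    mem_powersetCard.mpr ⟨hsub, by omega⟩
  rw [show allE.powersetCard 3 = trees16 ∪ tris from by decide, Finset.mem_union] at h20
  rcases h20 with h | h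
  · exact h
  · exfalso
    have key : ∀ (v : Fin 4), (∀ b, s(v,b) ∉ T.edgeFinset) → False := by
      intro v hv
      obtain ⟨b, hb⟩ := no_isolated T hT.isConnected v (if v = 0 then 1 else 0)
        (by split <;> simp_all)
      exact hv b (mem_edgeFinset.mpr (T.mem_edgeSet.mpr hb))
    simp only [tris, Finset.mem_insert, Finset.mem_singleton] at h
    rcases h with h | h | h | h
    · exact key 3 (by rw [h]; decide)
    · exact key 2 (by rw [h]; decide)
    · exact key 1 (by rw [h]; decide)
    · exact key 0 (by rw [h]; decide)

lemma edgeFinset_congr (G : SimpleGraph (Fin 4)) (i1 i2 : Fintype G.edgeSet) :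
    @edgeFinset _ G i1 = @edgeFinset _ G i2 := by
  cases Subsingleton.elim i1 i2; rfl

lemma degree_graph_congr {G G' : SimpleGraph (Fin 4)} (h : G = G') (v : Fin 4)
    (i1 : Fintype (G.neighborSet v)) (i2 : Fintype (G'.neighborSet v)) :
    @degree _ G v i1 = @degree _ G' v i2 := by
  subst h; cases Subsingleton.elim i1 i2; rfl

noncomputable def efc (T : SimpleGraph (Fin 4)) : Finset (Sym2 (Fin 4)) :=
  @edgeFinset _ T (Set.Finite.fintype T.edgeSet.toFinite)

lemma efc_eq (T : SimpleGraph (Fin 4)) (i : Fintype T.edgeSet) :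
    efc T = @edgeFinset _ T i :=
  edgeFinset_congr T _ _

noncomputable def degc (G : SimpleGraph (Fin 4)) (v : Fin 4) : ℕ :=
  @degree _ G v (Set.Finite.fintype (G.neighborSet v).toFinite)

lemma degc_eq (G : SimpleGraph (Fin 4)) (v : Fin 4) (i : Fintype (G.neighborSet v)) :
    degc G v = @degree _ G v i :=
  degree_graph_congr rfl v _ _

set_option maxHeartbeats 1000000 in
lemma eval_treePoly (w : Sym2 (Fin 4) → ℝ) (z : Fin 4 → ℂ) :
    MvPolynomial.aeval z (treePoly (⊤ : SimpleGraph (Fin 4)) w) =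
      ∑ s ∈ trees16, ((∏ e ∈ s, w e : ℝ) : ℂ) * ∏ v, z v ^ (degc (fes s) v - 1) := by
  classical
  rw [treePoly, map_sum]
  simp only [map_mul, MvPolynomial.aeval_C, map_prod, map_pow, MvPolynomial.aeval_X,
    Complex.coe_algebraMap]
  refine Finset.sum_nbij' (fun T => efc T) (fun s => fes s) ?_ ?_ ?_ ?_ ?_
  · intro T hT
    rw [Finset.mem_filter] at hT
    show efc T ∈ trees16
    rw [efc_eq T (Set.Finite.fintype T.edgeSet.toFinite)]
    exact forward T hT.2.2
  · intro s hs
    rw [Finset.mem_filter]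
    refine ⟨Finset.mem_univ _, le_top, ?_⟩
    fin_cases hs <;>
      exact (@decide_eq_true_eq _ (myTree _)).mp (by decide)
  · intro T hT
    show fes (efc T) = T
    rw [efc_eq T (Set.Finite.fintype T.edgeSet.toFinite), fes, coe_edgeFinset,
      fromEdgeSet_edgeSet]
  · intro s hs
    show efc (fes s) = s
    rw [efc_eq (fes s) (SimpleGraph.fintypeEdgeSet _)]
    fin_cases hs <;> decide
  · intro T hT
    have hfes : fes (efc T) = T := by
      rw [efc_eq T (Set.Finite.fintype T.edgeSet.toFinite), fes, coe_edgeFinset,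
        fromEdgeSet_edgeSet]
    show _ = (((∏ e ∈ efc T, w e : ℝ)) : ℂ) * ∏ v, z v ^ (degc (fes (efc T)) v - 1)
    rw [hfes]
    congr 1
    · push_cast
      exact Finset.prod_congr (efc_eq T _).symm fun _ _ => rfl
    · exact Finset.prod_congr rfl fun v _ =>
        congrArg (fun n => z v ^ (n - 1)) (degc_eq T v _).symm


set_option maxHeartbeats 2000000 in
lemma eval_explicit (e₁ e₂ e₃ : ℝ) (z : Fin 4 → ℂ) :
    MvPolynomial.aeval z (treePoly (⊤ : SimpleGraph (Fin 4))
      (fun e => if e = s(1, 2) then e₁ else if e = s(0, 2) then e₂ else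
        if e = s(0, 1) then e₃ else 1)) =
    (z 3)^2 + (z 3) * (z 0 * (↑e₂ + ↑e₃) + z 1 * (↑e₁ + ↑e₃) + z 2 * (↑e₁ + ↑e₂))
      + (z 0 + z 1 + z 2) * (z 0 * (↑e₂ * ↑e₃) + z 1 * (↑e₁ * ↑e₃) + z 2 * (↑e₁ * ↑e₂)) := by
  rw [eval_treePoly, trees16]
  have hc0 : (∏ e ∈ ({s(0,1),s(0,2),s(0,3)} : Finset (Sym2 (Fin 4))),
      (if e = s(1,2) then e₁ else if e = s(0,2) then e₂ else if e = s(0,1) then e₃ else 1))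
      = e₃ * (e₂ * ((1:ℝ))) := by
    rw [Finset.prod_insert (by decide), Finset.prod_insert (by decide), Finset.prod_singleton]
    simp only [(by decide : ¬((s(0,1) : Sym2 (Fin 4)) = s(1,2))), (by decide : ¬((s(0,1) : Sym2 (Fin 4)) = s(0,2))), (by decide : ¬((s(0,2) : Sym2 (Fin 4)) = s(1,2))), (by decide : ¬((s(0,3) : Sym2 (Fin 4)) = s(1,2))), (by decide : ¬((s(0,3) : Sym2 (Fin 4)) = s(0,2))), (by decide : ¬((s(0,3) : Sym2 (Fin 4)) = s(0,1))), eq_self_iff_true, if_true, if_false, ite_true, ite_false]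
  have hc1 : (∏ e ∈ ({s(0,1),s(1,2),s(1,3)} : Finset (Sym2 (Fin 4))),
      (if e = s(1,2) then e₁ else if e = s(0,2) then e₂ else if e = s(0,1) then e₃ else 1))
      = e₃ * (e₁ * ((1:ℝ))) := by
    rw [Finset.prod_insert (by decide), Finset.prod_insert (by decide), Finset.prod_singleton]
    simp only [(by decide : ¬((s(0,1) : Sym2 (Fin 4)) = s(1,2))), (by decide : ¬((s(0,1) : Sym2 (Fin 4)) = s(0,2))), (by decide : ¬((s(1,3) : Sym2 (Fin 4)) = s(1,2))), (by decide : ¬((s(1,3) : Sym2 (Fin 4)) = s(0,2))), (by decide : ¬((s(1,3) : Sym2 (Fin 4)) = s(0,1))), eq_self_iff_true, if_true, if_false, ite_true, ite_false]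
  have hc2 : (∏ e ∈ ({s(0,2),s(1,2),s(2,3)} : Finset (Sym2 (Fin 4))),
      (if e = s(1,2) then e₁ else if e = s(0,2) then e₂ else if e = s(0,1) then e₃ else 1))
      = e₂ * (e₁ * ((1:ℝ))) := by
    rw [Finset.prod_insert (by decide), Finset.prod_insert (by decide), Finset.prod_singleton]
    simp only [(by decide : ¬((s(0,2) : Sym2 (Fin 4)) = s(1,2))), (by decide : ¬((s(2,3) : Sym2 (Fin 4)) = s(1,2))), (by decide : ¬((s(2,3) : Sym2 (Fin 4)) = s(0,2))), (by decide : ¬((s(2,3) : Sym2 (Fin 4)) = s(0,1))), eq_self_iff_true, if_true, if_false, ite_true, ite_false]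
  have hc3 : (∏ e ∈ ({s(0,3),s(1,3),s(2,3)} : Finset (Sym2 (Fin 4))),
      (if e = s(1,2) then e₁ else if e = s(0,2) then e₂ else if e = s(0,1) then e₃ else 1))
      = (1:ℝ) * ((1:ℝ) * ((1:ℝ))) := by
    rw [Finset.prod_insert (by decide), Finset.prod_insert (by decide), Finset.prod_singleton]
    simp only [(by decide : ¬((s(0,3) : Sym2 (Fin 4)) = s(1,2))), (by decide : ¬((s(0,3) : Sym2 (Fin 4)) = s(0,2))), (by decide : ¬((s(0,3) : Sym2 (Fin 4)) = s(0,1))), (by decide : ¬((s(1,3) : Sym2 (Fin 4)) = s(1,2))), (by decide : ¬((s(1,3) : Sym2 (Fin 4)) = s(0,2))), (by decide : ¬((s(1,3) : Sym2 (Fin 4)) = s(0,1))), (by decide : ¬((s(2,3) : Sym2 (Fin 4)) = s(1,2))), (by decide : ¬((s(2,3) : Sym2 (Fin 4)) = s(0,2))), (by decide : ¬((s(2,3) : Sym2 (Fin 4)) = s(0,1))), eq_self_iff_true, if_true, if_false, ite_true, ite_false]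
  have hc4 : (∏ e ∈ ({s(0,1),s(0,2),s(1,3)} : Finset (Sym2 (Fin 4))),
      (if e = s(1,2) then e₁ else if e = s(0,2) then e₂ else if e = s(0,1) then e₃ else 1))
      = e₃ * (e₂ * ((1:ℝ))) := by
    rw [Finset.prod_insert (by decide), Finset.prod_insert (by decide), Finset.prod_singleton]
    simp only [(by decide : ¬((s(0,1) : Sym2 (Fin 4)) = s(1,2))), (by decide : ¬((s(0,1) : Sym2 (Fin 4)) = s(0,2))), (by decide : ¬((s(0,2) : Sym2 (Fin 4)) = s(1,2))), (by decide : ¬((s(1,3) : Sym2 (Fin 4)) = s(1,2))), (by decide : ¬((s(1,3) : Sym2 (Fin 4)) = s(0,2))), (by decide : ¬((s(1,3) : Sym2 (Fin 4)) = s(0,1))), eq_self_iff_true, if_true, if_false, ite_true, ite_false]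
  have hc5 : (∏ e ∈ ({s(0,1),s(0,2),s(2,3)} : Finset (Sym2 (Fin 4))),
      (if e = s(1,2) then e₁ else if e = s(0,2) then e₂ else if e = s(0,1) then e₃ else 1))
      = e₃ * (e₂ * ((1:ℝ))) := by
    rw [Finset.prod_insert (by decide), Finset.prod_insert (by decide), Finset.prod_singleton]
    simp only [(by decide : ¬((s(0,1) : Sym2 (Fin 4)) = s(1,2))), (by decide : ¬((s(0,1) : Sym2 (Fin 4)) = s(0,2))), (by decide : ¬((s(0,2) : Sym2 (Fin 4)) = s(1,2))), (by decide : ¬((s(2,3) : Sym2 (Fin 4)) = s(1,2))), (by decide : ¬((s(2,3) : Sym2 (Fin 4)) = s(0,2))), (by decide : ¬((s(2,3) : Sym2 (Fin 4)) = s(0,1))), eq_self_iff_true, if_true, if_false, ite_true, ite_false]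
  have hc6 : (∏ e ∈ ({s(0,1),s(0,3),s(1,2)} : Finset (Sym2 (Fin 4))),
      (if e = s(1,2) then e₁ else if e = s(0,2) then e₂ else if e = s(0,1) then e₃ else 1))
      = e₃ * ((1:ℝ) * (e₁)) := by
    rw [Finset.prod_insert (by decide), Finset.prod_insert (by decide), Finset.prod_singleton]
    simp only [(by decide : ¬((s(0,1) : Sym2 (Fin 4)) = s(1,2))), (by decide : ¬((s(0,1) : Sym2 (Fin 4)) = s(0,2))), (by decide : ¬((s(0,3) : Sym2 (Fin 4)) = s(1,2))), (by decide : ¬((s(0,3) : Sym2 (Fin 4)) = s(0,2))), (by decide : ¬((s(0,3) : Sym2 (Fin 4)) = s(0,1))), eq_self_iff_true, if_true, if_false, ite_true, ite_false]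
  have hc7 : (∏ e ∈ ({s(0,1),s(0,3),s(2,3)} : Finset (Sym2 (Fin 4))),
      (if e = s(1,2) then e₁ else if e = s(0,2) then e₂ else if e = s(0,1) then e₃ else 1))
      = e₃ * ((1:ℝ) * ((1:ℝ))) := by
    rw [Finset.prod_insert (by decide), Finset.prod_insert (by decide), Finset.prod_singleton]
    simp only [(by decide : ¬((s(0,1) : Sym2 (Fin 4)) = s(1,2))), (by decide : ¬((s(0,1) : Sym2 (Fin 4)) = s(0,2))), (by decide : ¬((s(0,3) : Sym2 (Fin 4)) = s(1,2))), (by decide : ¬((s(0,3) : Sym2 (Fin 4)) = s(0,2))), (by decide : ¬((s(0,3) : Sym2 (Fin 4)) = s(0,1))), (by decide : ¬((s(2,3) : Sym2 (Fin 4)) = s(1,2))), (by decide : ¬((s(2,3) : Sym2 (Fin 4)) = s(0,2))), (by decide : ¬((s(2,3) : Sym2 (Fin 4)) = s(0,1))), eq_self_iff_true, if_true, if_false, ite_true, ite_false]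
  have hc8 : (∏ e ∈ ({s(0,1),s(1,3),s(2,3)} : Finset (Sym2 (Fin 4))),
      (if e = s(1,2) then e₁ else if e = s(0,2) then e₂ else if e = s(0,1) then e₃ else 1))
      = e₃ * ((1:ℝ) * ((1:ℝ))) := by
    rw [Finset.prod_insert (by decide), Finset.prod_insert (by decide), Finset.prod_singleton]
    simp only [(by decide : ¬((s(0,1) : Sym2 (Fin 4)) = s(1,2))), (by decide : ¬((s(0,1) : Sym2 (Fin 4)) = s(0,2))), (by decide : ¬((s(1,3) : Sym2 (Fin 4)) = s(1,2))), (by decide : ¬((s(1,3) : Sym2 (Fin 4)) = s(0,2))), (by decide : ¬((s(1,3) : Sym2 (Fin 4)) = s(0,1))), (by decide : ¬((s(2,3) : Sym2 (Fin 4)) = s(1,2))), (by decide : ¬((s(2,3) : Sym2 (Fin 4)) = s(0,2))), (by decide : ¬((s(2,3) : Sym2 (Fin 4)) = s(0,1))), eq_self_iff_true, if_true, if_false, ite_true, ite_false]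
  have hc9 : (∏ e ∈ ({s(0,1),s(1,2),s(2,3)} : Finset (Sym2 (Fin 4))),
      (if e = s(1,2) then e₁ else if e = s(0,2) then e₂ else if e = s(0,1) then e₃ else 1))
      = e₃ * (e₁ * ((1:ℝ))) := by
    rw [Finset.prod_insert (by decide), Finset.prod_insert (by decide), Finset.prod_singleton]
    simp only [(by decide : ¬((s(0,1) : Sym2 (Fin 4)) = s(1,2))), (by decide : ¬((s(0,1) : Sym2 (Fin 4)) = s(0,2))), (by decide : ¬((s(2,3) : Sym2 (Fin 4)) = s(1,2))), (by decide : ¬((s(2,3) : Sym2 (Fin 4)) = s(0,2))), (by decide : ¬((s(2,3) : Sym2 (Fin 4)) = s(0,1))), eq_self_iff_true, if_true, if_false, ite_true, ite_false]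
  have hc10 : (∏ e ∈ ({s(0,2),s(0,3),s(1,2)} : Finset (Sym2 (Fin 4))),
      (if e = s(1,2) then e₁ else if e = s(0,2) then e₂ else if e = s(0,1) then e₃ else 1))
      = e₂ * ((1:ℝ) * (e₁)) := by
    rw [Finset.prod_insert (by decide), Finset.prod_insert (by decide), Finset.prod_singleton]
    simp only [(by decide : ¬((s(0,2) : Sym2 (Fin 4)) = s(1,2))), (by decide : ¬((s(0,3) : Sym2 (Fin 4)) = s(1,2))), (by decide : ¬((s(0,3) : Sym2 (Fin 4)) = s(0,2))), (by decide : ¬((s(0,3) : Sym2 (Fin 4)) = s(0,1))), eq_self_iff_true, if_true, if_false, ite_true, ite_false]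
  have hc11 : (∏ e ∈ ({s(0,2),s(0,3),s(1,3)} : Finset (Sym2 (Fin 4))),
      (if e = s(1,2) then e₁ else if e = s(0,2) then e₂ else if e = s(0,1) then e₃ else 1))
      = e₂ * ((1:ℝ) * ((1:ℝ))) := by
    rw [Finset.prod_insert (by decide), Finset.prod_insert (by decide), Finset.prod_singleton]
    simp only [(by decide : ¬((s(0,2) : Sym2 (Fin 4)) = s(1,2))), (by decide : ¬((s(0,3) : Sym2 (Fin 4)) = s(1,2))), (by decide : ¬((s(0,3) : Sym2 (Fin 4)) = s(0,2))), (by decide : ¬((s(0,3) : Sym2 (Fin 4)) = s(0,1))), (by decide : ¬((s(1,3) : Sym2 (Fin 4)) = s(1,2))), (by decide : ¬((s(1,3) : Sym2 (Fin 4)) = s(0,2))), (by decide : ¬((s(1,3) : Sym2 (Fin 4)) = s(0,1))), eq_self_iff_true, if_true, if_false, ite_true, ite_false]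
  have hc12 : (∏ e ∈ ({s(0,2),s(1,3),s(2,3)} : Finset (Sym2 (Fin 4))),
      (if e = s(1,2) then e₁ else if e = s(0,2) then e₂ else if e = s(0,1) then e₃ else 1))
      = e₂ * ((1:ℝ) * ((1:ℝ))) := by
    rw [Finset.prod_insert (by decide), Finset.prod_insert (by decide), Finset.prod_singleton]
    simp only [(by decide : ¬((s(0,2) : Sym2 (Fin 4)) = s(1,2))), (by decide : ¬((s(1,3) : Sym2 (Fin 4)) = s(1,2))), (by decide : ¬((s(1,3) : Sym2 (Fin 4)) = s(0,2))), (by decide : ¬((s(1,3) : Sym2 (Fin 4)) = s(0,1))), (by decide : ¬((s(2,3) : Sym2 (Fin 4)) = s(1,2))), (by decide : ¬((s(2,3) : Sym2 (Fin 4)) = s(0,2))), (by decide : ¬((s(2,3) : Sym2 (Fin 4)) = s(0,1))), eq_self_iff_true, if_true, if_false, ite_true, ite_false]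
  have hc13 : (∏ e ∈ ({s(0,2),s(1,2),s(1,3)} : Finset (Sym2 (Fin 4))),
      (if e = s(1,2) then e₁ else if e = s(0,2) then e₂ else if e = s(0,1) then e₃ else 1))
      = e₂ * (e₁ * ((1:ℝ))) := by
    rw [Finset.prod_insert (by decide), Finset.prod_insert (by decide), Finset.prod_singleton]
    simp only [(by decide : ¬((s(0,2) : Sym2 (Fin 4)) = s(1,2))), (by decide : ¬((s(1,3) : Sym2 (Fin 4)) = s(1,2))), (by decide : ¬((s(1,3) : Sym2 (Fin 4)) = s(0,2))), (by decide : ¬((s(1,3) : Sym2 (Fin 4)) = s(0,1))), eq_self_iff_true, if_true, if_false, ite_true, ite_false]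
  have hc14 : (∏ e ∈ ({s(0,3),s(1,2),s(1,3)} : Finset (Sym2 (Fin 4))),
      (if e = s(1,2) then e₁ else if e = s(0,2) then e₂ else if e = s(0,1) then e₃ else 1))
      = (1:ℝ) * (e₁ * ((1:ℝ))) := by
    rw [Finset.prod_insert (by decide), Finset.prod_insert (by decide), Finset.prod_singleton]
    simp only [(by decide : ¬((s(0,3) : Sym2 (Fin 4)) = s(1,2))), (by decide : ¬((s(0,3) : Sym2 (Fin 4)) = s(0,2))), (by decide : ¬((s(0,3) : Sym2 (Fin 4)) = s(0,1))), (by decide : ¬((s(1,3) : Sym2 (Fin 4)) = s(1,2))), (by decide : ¬((s(1,3) : Sym2 (Fin 4)) = s(0,2))), (by decide : ¬((s(1,3) : Sym2 (Fin 4)) = s(0,1))), eq_self_iff_true, if_true, if_false, ite_true, ite_false]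
  have hc15 : (∏ e ∈ ({s(0,3),s(1,2),s(2,3)} : Finset (Sym2 (Fin 4))),
      (if e = s(1,2) then e₁ else if e = s(0,2) then e₂ else if e = s(0,1) then e₃ else 1))
      = (1:ℝ) * (e₁ * ((1:ℝ))) := by
    rw [Finset.prod_insert (by decide), Finset.prod_insert (by decide), Finset.prod_singleton]
    simp only [(by decide : ¬((s(0,3) : Sym2 (Fin 4)) = s(1,2))), (by decide : ¬((s(0,3) : Sym2 (Fin 4)) = s(0,2))), (by decide : ¬((s(0,3) : Sym2 (Fin 4)) = s(0,1))), (by decide : ¬((s(2,3) : Sym2 (Fin 4)) = s(1,2))), (by decide : ¬((s(2,3) : Sym2 (Fin 4)) = s(0,2))), (by decide : ¬((s(2,3) : Sym2 (Fin 4)) = s(0,1))), eq_self_iff_true, if_true, if_false, ite_true, ite_false]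
  have hd0_0 : Stmt10Aux.degc (Stmt10Aux.fes ({s(0,1),s(0,2),s(0,3)} : Finset (Sym2 (Fin 4)))) 0 = 3 := by
    rw [degc_eq _ _ inferInstance]; decide
  have hd0_1 : Stmt10Aux.degc (Stmt10Aux.fes ({s(0,1),s(0,2),s(0,3)} : Finset (Sym2 (Fin 4)))) 1 = 1 := by
    rw [degc_eq _ _ inferInstance]; decide
  have hd0_2 : Stmt10Aux.degc (Stmt10Aux.fes ({s(0,1),s(0,2),s(0,3)} : Finset (Sym2 (Fin 4)))) 2 = 1 := by
    rw [degc_eq _ _ inferInstance]; decide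
  have hd0_3 : Stmt10Aux.degc (Stmt10Aux.fes ({s(0,1),s(0,2),s(0,3)} : Finset (Sym2 (Fin 4)))) 3 = 1 := by
    rw [degc_eq _ _ inferInstance]; decide
  have hd1_0 : Stmt10Aux.degc (Stmt10Aux.fes ({s(0,1),s(1,2),s(1,3)} : Finset (Sym2 (Fin 4)))) 0 = 1 := by
    rw [degc_eq _ _ inferInstance]; decide
  have hd1_1 : Stmt10Aux.degc (Stmt10Aux.fes ({s(0,1),s(1,2),s(1,3)} : Finset (Sym2 (Fin 4)))) 1 = 3 := by
    rw [degc_eq _ _ inferInstance]; decide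
  have hd1_2 : Stmt10Aux.degc (Stmt10Aux.fes ({s(0,1),s(1,2),s(1,3)} : Finset (Sym2 (Fin 4)))) 2 = 1 := by
    rw [degc_eq _ _ inferInstance]; decide
  have hd1_3 : Stmt10Aux.degc (Stmt10Aux.fes ({s(0,1),s(1,2),s(1,3)} : Finset (Sym2 (Fin 4)))) 3 = 1 := by
    rw [degc_eq _ _ inferInstance]; decide
  have hd2_0 : Stmt10Aux.degc (Stmt10Aux.fes ({s(0,2),s(1,2),s(2,3)} : Finset (Sym2 (Fin 4)))) 0 = 1 := by
    rw [degc_eq _ _ inferInstance]; decide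
  have hd2_1 : Stmt10Aux.degc (Stmt10Aux.fes ({s(0,2),s(1,2),s(2,3)} : Finset (Sym2 (Fin 4)))) 1 = 1 := by
    rw [degc_eq _ _ inferInstance]; decide
  have hd2_2 : Stmt10Aux.degc (Stmt10Aux.fes ({s(0,2),s(1,2),s(2,3)} : Finset (Sym2 (Fin 4)))) 2 = 3 := by
    rw [degc_eq _ _ inferInstance]; decide
  have hd2_3 : Stmt10Aux.degc (Stmt10Aux.fes ({s(0,2),s(1,2),s(2,3)} : Finset (Sym2 (Fin 4)))) 3 = 1 := by
    rw [degc_eq _ _ inferInstance]; decide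
  have hd3_0 : Stmt10Aux.degc (Stmt10Aux.fes ({s(0,3),s(1,3),s(2,3)} : Finset (Sym2 (Fin 4)))) 0 = 1 := by
    rw [degc_eq _ _ inferInstance]; decide
  have hd3_1 : Stmt10Aux.degc (Stmt10Aux.fes ({s(0,3),s(1,3),s(2,3)} : Finset (Sym2 (Fin 4)))) 1 = 1 := by
    rw [degc_eq _ _ inferInstance]; decide
  have hd3_2 : Stmt10Aux.degc (Stmt10Aux.fes ({s(0,3),s(1,3),s(2,3)} : Finset (Sym2 (Fin 4)))) 2 = 1 := by
    rw [degc_eq _ _ inferInstance]; decide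
  have hd3_3 : Stmt10Aux.degc (Stmt10Aux.fes ({s(0,3),s(1,3),s(2,3)} : Finset (Sym2 (Fin 4)))) 3 = 3 := by
    rw [degc_eq _ _ inferInstance]; decide
  have hd4_0 : Stmt10Aux.degc (Stmt10Aux.fes ({s(0,1),s(0,2),s(1,3)} : Finset (Sym2 (Fin 4)))) 0 = 2 := by
    rw [degc_eq _ _ inferInstance]; decide
  have hd4_1 : Stmt10Aux.degc (Stmt10Aux.fes ({s(0,1),s(0,2),s(1,3)} : Finset (Sym2 (Fin 4)))) 1 = 2 := by
    rw [degc_eq _ _ inferInstance]; decide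
  have hd4_2 : Stmt10Aux.degc (Stmt10Aux.fes ({s(0,1),s(0,2),s(1,3)} : Finset (Sym2 (Fin 4)))) 2 = 1 := by
    rw [degc_eq _ _ inferInstance]; decide
  have hd4_3 : Stmt10Aux.degc (Stmt10Aux.fes ({s(0,1),s(0,2),s(1,3)} : Finset (Sym2 (Fin 4)))) 3 = 1 := by
    rw [degc_eq _ _ inferInstance]; decide
  have hd5_0 : Stmt10Aux.degc (Stmt10Aux.fes ({s(0,1),s(0,2),s(2,3)} : Finset (Sym2 (Fin 4)))) 0 = 2 := by
    rw [degc_eq _ _ inferInstance]; decide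
  have hd5_1 : Stmt10Aux.degc (Stmt10Aux.fes ({s(0,1),s(0,2),s(2,3)} : Finset (Sym2 (Fin 4)))) 1 = 1 := by
    rw [degc_eq _ _ inferInstance]; decide
  have hd5_2 : Stmt10Aux.degc (Stmt10Aux.fes ({s(0,1),s(0,2),s(2,3)} : Finset (Sym2 (Fin 4)))) 2 = 2 := by
    rw [degc_eq _ _ inferInstance]; decide
  have hd5_3 : Stmt10Aux.degc (Stmt10Aux.fes ({s(0,1),s(0,2),s(2,3)} : Finset (Sym2 (Fin 4)))) 3 = 1 := by
    rw [degc_eq _ _ inferInstance]; decide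
  have hd6_0 : Stmt10Aux.degc (Stmt10Aux.fes ({s(0,1),s(0,3),s(1,2)} : Finset (Sym2 (Fin 4)))) 0 = 2 := by
    rw [degc_eq _ _ inferInstance]; decide
  have hd6_1 : Stmt10Aux.degc (Stmt10Aux.fes ({s(0,1),s(0,3),s(1,2)} : Finset (Sym2 (Fin 4)))) 1 = 2 := by
    rw [degc_eq _ _ inferInstance]; decide
  have hd6_2 : Stmt10Aux.degc (Stmt10Aux.fes ({s(0,1),s(0,3),s(1,2)} : Finset (Sym2 (Fin 4)))) 2 = 1 := by
    rw [degc_eq _ _ inferInstance]; decide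
  have hd6_3 : Stmt10Aux.degc (Stmt10Aux.fes ({s(0,1),s(0,3),s(1,2)} : Finset (Sym2 (Fin 4)))) 3 = 1 := by
    rw [degc_eq _ _ inferInstance]; decide
  have hd7_0 : Stmt10Aux.degc (Stmt10Aux.fes ({s(0,1),s(0,3),s(2,3)} : Finset (Sym2 (Fin 4)))) 0 = 2 := by
    rw [degc_eq _ _ inferInstance]; decide
  have hd7_1 : Stmt10Aux.degc (Stmt10Aux.fes ({s(0,1),s(0,3),s(2,3)} : Finset (Sym2 (Fin 4)))) 1 = 1 := by
    rw [degc_eq _ _ inferInstance]; decide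
  have hd7_2 : Stmt10Aux.degc (Stmt10Aux.fes ({s(0,1),s(0,3),s(2,3)} : Finset (Sym2 (Fin 4)))) 2 = 1 := by
    rw [degc_eq _ _ inferInstance]; decide
  have hd7_3 : Stmt10Aux.degc (Stmt10Aux.fes ({s(0,1),s(0,3),s(2,3)} : Finset (Sym2 (Fin 4)))) 3 = 2 := by
    rw [degc_eq _ _ inferInstance]; decide
  have hd8_0 : Stmt10Aux.degc (Stmt10Aux.fes ({s(0,1),s(1,3),s(2,3)} : Finset (Sym2 (Fin 4)))) 0 = 1 := by
    rw [degc_eq _ _ inferInstance]; decide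
  have hd8_1 : Stmt10Aux.degc (Stmt10Aux.fes ({s(0,1),s(1,3),s(2,3)} : Finset (Sym2 (Fin 4)))) 1 = 2 := by
    rw [degc_eq _ _ inferInstance]; decide
  have hd8_2 : Stmt10Aux.degc (Stmt10Aux.fes ({s(0,1),s(1,3),s(2,3)} : Finset (Sym2 (Fin 4)))) 2 = 1 := by
    rw [degc_eq _ _ inferInstance]; decide
  have hd8_3 : Stmt10Aux.degc (Stmt10Aux.fes ({s(0,1),s(1,3),s(2,3)} : Finset (Sym2 (Fin 4)))) 3 = 2 := by
    rw [degc_eq _ _ inferInstance]; decide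
  have hd9_0 : Stmt10Aux.degc (Stmt10Aux.fes ({s(0,1),s(1,2),s(2,3)} : Finset (Sym2 (Fin 4)))) 0 = 1 := by
    rw [degc_eq _ _ inferInstance]; decide
  have hd9_1 : Stmt10Aux.degc (Stmt10Aux.fes ({s(0,1),s(1,2),s(2,3)} : Finset (Sym2 (Fin 4)))) 1 = 2 := by
    rw [degc_eq _ _ inferInstance]; decide
  have hd9_2 : Stmt10Aux.degc (Stmt10Aux.fes ({s(0,1),s(1,2),s(2,3)} : Finset (Sym2 (Fin 4)))) 2 = 2 := by
    rw [degc_eq _ _ inferInstance]; decide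
  have hd9_3 : Stmt10Aux.degc (Stmt10Aux.fes ({s(0,1),s(1,2),s(2,3)} : Finset (Sym2 (Fin 4)))) 3 = 1 := by
    rw [degc_eq _ _ inferInstance]; decide
  have hd10_0 : Stmt10Aux.degc (Stmt10Aux.fes ({s(0,2),s(0,3),s(1,2)} : Finset (Sym2 (Fin 4)))) 0 = 2 := by
    rw [degc_eq _ _ inferInstance]; decide
  have hd10_1 : Stmt10Aux.degc (Stmt10Aux.fes ({s(0,2),s(0,3),s(1,2)} : Finset (Sym2 (Fin 4)))) 1 = 1 := by
    rw [degc_eq _ _ inferInstance]; decide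
  have hd10_2 : Stmt10Aux.degc (Stmt10Aux.fes ({s(0,2),s(0,3),s(1,2)} : Finset (Sym2 (Fin 4)))) 2 = 2 := by
    rw [degc_eq _ _ inferInstance]; decide
  have hd10_3 : Stmt10Aux.degc (Stmt10Aux.fes ({s(0,2),s(0,3),s(1,2)} : Finset (Sym2 (Fin 4)))) 3 = 1 := by
    rw [degc_eq _ _ inferInstance]; decide
  have hd11_0 : Stmt10Aux.degc (Stmt10Aux.fes ({s(0,2),s(0,3),s(1,3)} : Finset (Sym2 (Fin 4)))) 0 = 2 := by
    rw [degc_eq _ _ inferInstance]; decide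
  have hd11_1 : Stmt10Aux.degc (Stmt10Aux.fes ({s(0,2),s(0,3),s(1,3)} : Finset (Sym2 (Fin 4)))) 1 = 1 := by
    rw [degc_eq _ _ inferInstance]; decide
  have hd11_2 : Stmt10Aux.degc (Stmt10Aux.fes ({s(0,2),s(0,3),s(1,3)} : Finset (Sym2 (Fin 4)))) 2 = 1 := by
    rw [degc_eq _ _ inferInstance]; decide
  have hd11_3 : Stmt10Aux.degc (Stmt10Aux.fes ({s(0,2),s(0,3),s(1,3)} : Finset (Sym2 (Fin 4)))) 3 = 2 := by
    rw [degc_eq _ _ inferInstance]; decide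
  have hd12_0 : Stmt10Aux.degc (Stmt10Aux.fes ({s(0,2),s(1,3),s(2,3)} : Finset (Sym2 (Fin 4)))) 0 = 1 := by
    rw [degc_eq _ _ inferInstance]; decide
  have hd12_1 : Stmt10Aux.degc (Stmt10Aux.fes ({s(0,2),s(1,3),s(2,3)} : Finset (Sym2 (Fin 4)))) 1 = 1 := by
    rw [degc_eq _ _ inferInstance]; decide
  have hd12_2 : Stmt10Aux.degc (Stmt10Aux.fes ({s(0,2),s(1,3),s(2,3)} : Finset (Sym2 (Fin 4)))) 2 = 2 := by
    rw [degc_eq _ _ inferInstance]; decide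
  have hd12_3 : Stmt10Aux.degc (Stmt10Aux.fes ({s(0,2),s(1,3),s(2,3)} : Finset (Sym2 (Fin 4)))) 3 = 2 := by
    rw [degc_eq _ _ inferInstance]; decide
  have hd13_0 : Stmt10Aux.degc (Stmt10Aux.fes ({s(0,2),s(1,2),s(1,3)} : Finset (Sym2 (Fin 4)))) 0 = 1 := by
    rw [degc_eq _ _ inferInstance]; decide
  have hd13_1 : Stmt10Aux.degc (Stmt10Aux.fes ({s(0,2),s(1,2),s(1,3)} : Finset (Sym2 (Fin 4)))) 1 = 2 := by
    rw [degc_eq _ _ inferInstance]; decide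
  have hd13_2 : Stmt10Aux.degc (Stmt10Aux.fes ({s(0,2),s(1,2),s(1,3)} : Finset (Sym2 (Fin 4)))) 2 = 2 := by
    rw [degc_eq _ _ inferInstance]; decide
  have hd13_3 : Stmt10Aux.degc (Stmt10Aux.fes ({s(0,2),s(1,2),s(1,3)} : Finset (Sym2 (Fin 4)))) 3 = 1 := by
    rw [degc_eq _ _ inferInstance]; decide
  have hd14_0 : Stmt10Aux.degc (Stmt10Aux.fes ({s(0,3),s(1,2),s(1,3)} : Finset (Sym2 (Fin 4)))) 0 = 1 := by
    rw [degc_eq _ _ inferInstance]; decide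
  have hd14_1 : Stmt10Aux.degc (Stmt10Aux.fes ({s(0,3),s(1,2),s(1,3)} : Finset (Sym2 (Fin 4)))) 1 = 2 := by
    rw [degc_eq _ _ inferInstance]; decide
  have hd14_2 : Stmt10Aux.degc (Stmt10Aux.fes ({s(0,3),s(1,2),s(1,3)} : Finset (Sym2 (Fin 4)))) 2 = 1 := by
    rw [degc_eq _ _ inferInstance]; decide
  have hd14_3 : Stmt10Aux.degc (Stmt10Aux.fes ({s(0,3),s(1,2),s(1,3)} : Finset (Sym2 (Fin 4)))) 3 = 2 := by
    rw [degc_eq _ _ inferInstance]; decide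
  have hd15_0 : Stmt10Aux.degc (Stmt10Aux.fes ({s(0,3),s(1,2),s(2,3)} : Finset (Sym2 (Fin 4)))) 0 = 1 := by
    rw [degc_eq _ _ inferInstance]; decide
  have hd15_1 : Stmt10Aux.degc (Stmt10Aux.fes ({s(0,3),s(1,2),s(2,3)} : Finset (Sym2 (Fin 4)))) 1 = 1 := by
    rw [degc_eq _ _ inferInstance]; decide
  have hd15_2 : Stmt10Aux.degc (Stmt10Aux.fes ({s(0,3),s(1,2),s(2,3)} : Finset (Sym2 (Fin 4)))) 2 = 2 := by
    rw [degc_eq _ _ inferInstance]; decide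
  have hd15_3 : Stmt10Aux.degc (Stmt10Aux.fes ({s(0,3),s(1,2),s(2,3)} : Finset (Sym2 (Fin 4)))) 3 = 2 := by
    rw [degc_eq _ _ inferInstance]; decide
  rw [Finset.sum_insert (by decide), Finset.sum_insert (by decide), Finset.sum_insert (by decide), Finset.sum_insert (by decide), Finset.sum_insert (by decide), Finset.sum_insert (by decide), Finset.sum_insert (by decide), Finset.sum_insert (by decide), Finset.sum_insert (by decide), Finset.sum_insert (by decide), Finset.sum_insert (by decide), Finset.sum_insert (by decide), Finset.sum_insert (by decide), Finset.sum_insert (by decide), Finset.sum_insert (by decide), Finset.sum_singleton]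
  simp only [hc0, hc1, hc2, hc3, hc4, hc5, hc6, hc7, hc8, hc9, hc10, hc11, hc12, hc13, hc14, hc15, hd0_0, hd0_1, hd0_2, hd0_3, hd1_0, hd1_1, hd1_2, hd1_3, hd2_0, hd2_1, hd2_2, hd2_3, hd3_0, hd3_1, hd3_2, hd3_3, hd4_0, hd4_1, hd4_2, hd4_3, hd5_0, hd5_1, hd5_2, hd5_3, hd6_0, hd6_1, hd6_2, hd6_3, hd7_0, hd7_1, hd7_2, hd7_3, hd8_0, hd8_1, hd8_2, hd8_3, hd9_0, hd9_1, hd9_2, hd9_3, hd10_0, hd10_1, hd10_2, hd10_3, hd11_0, hd11_1, hd11_2, hd11_3, hd12_0, hd12_1, hd12_2, hd12_3, hd13_0, hd13_1, hd13_2, hd13_3, hd14_0, hd14_1, hd14_2, hd14_3, hd15_0, hd15_1, hd15_2, hd15_3, Fin.prod_univ_four]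
  push_cast
  ring

open Complex in
set_option maxHeartbeats 800000 in
lemma quad_root (a b c : ℝ) (ha : 0 < a) (hb : 0 < b) (hc : 0 < c)
    (hmid : (a - b) * (a - c) < 0) :
    ∃ z0 z1 z2 z3 : ℂ, 0 < z0.im ∧ 0 < z1.im ∧ 0 < z2.im ∧ 0 < z3.im ∧
      z3^2 + z3 * (z0*(b+c) + z1*(a+c) + z2*(a+b))
        + (z0+z1+z2) * (z0*(b*c) + z1*(a*c) + z2*(a*b)) = 0 := by
  obtain ⟨Δ, hΔdef⟩ : ∃ t : ℝ, t = 4*((a*b + a*c - b*c) - a^2) := ⟨_, rfl⟩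
  have hΔpos : 0 < Δ := by rw [hΔdef]; nlinarith
  have hSpos : 0 < a + b + c := by positivity
  have hsΔ : 0 < Real.sqrt Δ := Real.sqrt_pos.mpr hΔpos
  obtain ⟨ε, hε⟩ : ∃ t : ℝ, t = Real.sqrt Δ / (4*(a+b+c)) := ⟨_, rfl⟩
  have hεpos : 0 < ε := by rw [hε]; positivity
  obtain ⟨x, hx⟩ : ∃ t : ℝ, t = 4*a^2 - 4*ε^2*(a+b+c)^2 - 4*(a*b + a*c - b*c)
      + 12*ε^2*(a*b + b*c + c*a) := ⟨_, rfl⟩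
  obtain ⟨y, hy⟩ : ∃ t : ℝ, t = 8*ε*((a-b)*(a-c)) := ⟨_, rfl⟩
  have hyneg : y < 0 := by rw [hy]; nlinarith
  have hxneg : x ≤ -Δ := by
    have hkey : 0 ≤ ε^2*(a^2+b^2+c^2-a*b-b*c-a*c) :=
      mul_nonneg (sq_nonneg ε) (by nlinarith [sq_nonneg (a-b), sq_nonneg (b-c), sq_nonneg (a-c)])
    rw [hx, hΔdef]; nlinarith [hkey]
  obtain ⟨r, hr⟩ : ∃ t : ℝ, t = ‖(x:ℂ) + (y:ℂ)*I‖ := ⟨_, rfl⟩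
  have hr2 : r^2 = x^2 + y^2 := by
    rw [hr, Complex.sq_norm, Complex.normSq_add_mul_I]
  have hr0 : 0 ≤ r := by rw [hr]; exact norm_nonneg _
  have hrx : -x ≤ r := by
    have h1 : |((x:ℂ) + (y:ℂ)*I).re| ≤ ‖(x:ℂ) + (y:ℂ)*I‖ := Complex.abs_re_le_norm _
    have h2 : ((x:ℂ) + (y:ℂ)*I).re = x := by simp
    rw [h2] at h1
    calc -x ≤ |x| := neg_le_abs x
    _ ≤ r := by rw [hr]; exact h1
  obtain ⟨sp, hsp⟩ : ∃ t : ℝ, t = Real.sqrt ((r+x)/2) := ⟨_, rfl⟩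
  obtain ⟨sm, hsm⟩ : ∃ t : ℝ, t = Real.sqrt ((r-x)/2) := ⟨_, rfl⟩
  have hsp2 : sp^2 = (r+x)/2 := by rw [hsp]; exact Real.sq_sqrt (by linarith)
  have hsm2 : sm^2 = (r-x)/2 := by rw [hsm]; exact Real.sq_sqrt (by linarith)
  have hsm0 : 0 ≤ sm := by rw [hsm]; exact Real.sqrt_nonneg _
  have hspsm : sp * sm = -y/2 := by
    rw [hsp, hsm, ← Real.sqrt_mul (by linarith)]
    rw [show (r+x)/2 * ((r-x)/2) = (-y/2)^2 by nlinarith [hr2]]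
    exact Real.sqrt_sq (by linarith)
  refine ⟨-1 + (ε:ℂ)*I, 1 + (ε:ℂ)*I, 1 + (ε:ℂ)*I,
    (((-2*a - sp)/2 : ℝ):ℂ) + (((-2*ε*(a+b+c) + sm)/2 : ℝ):ℂ)*I, ?_, ?_, ?_, ?_, ?_⟩
  · simp [hεpos]
  · simp [hεpos]
  · simp [hεpos]
  · have him : ((((-2*a - sp)/2 : ℝ):ℂ) + (((-2*ε*(a+b+c) + sm)/2 : ℝ):ℂ)*I).im
        = (-2*ε*(a+b+c) + sm)/2 := by simp
    rw [him]
    have hsmge : Real.sqrt Δ ≤ sm := by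
      rw [hsm]
      calc Real.sqrt Δ = Real.sqrt Δ := rfl
      _ ≤ Real.sqrt ((r-x)/2) := Real.sqrt_le_sqrt (by nlinarith)
    have hεS : 2*ε*(a+b+c) = Real.sqrt Δ / 2 := by
      rw [hε]; field_simp; ring
    nlinarith [hεS]
  · -- the root equation
    have hw2 : ((sp:ℂ) - (sm:ℂ)*I)^2 = (x:ℂ) + (y:ℂ)*I := by
      have h1 : ((sp:ℂ))^2 = (((r+x)/2 : ℝ) : ℂ) := by exact_mod_cast congrArg (fun t : ℝ => (t:ℂ)) hsp2
      have h2 : ((sm:ℂ))^2 = (((r-x)/2 : ℝ) : ℂ) := by exact_mod_cast congrArg (fun t : ℝ => (t:ℂ)) hsm2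
      have h3 : (sp:ℂ) * (sm:ℂ) = ((-y/2 : ℝ) : ℂ) := by exact_mod_cast congrArg (fun t : ℝ => (t:ℂ)) hspsm
      push_cast at h1 h2 h3 ⊢
      linear_combination h1 - h2 - 2*Complex.I*h3 + ((sm:ℂ)^2) * Complex.I_sq
    have hD : ((2*a:ℝ) + ((2*ε*(a+b+c) : ℝ):ℂ)*I)^2
        - 4*(((-1 + (ε:ℂ)*I)+(1 + (ε:ℂ)*I)+(1 + (ε:ℂ)*I))
          * ((-1 + (ε:ℂ)*I)*(b*c) + (1 + (ε:ℂ)*I)*(a*c) + (1 + (ε:ℂ)*I)*(a*b)))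
        = (x:ℂ) + (y:ℂ)*I := by
      rw [hx, hy]
      push_cast
      linear_combination ((4:ℂ)*(ε:ℂ)^2*((a:ℂ)+b+c)^2 - 12*(ε:ℂ)^2*((a:ℂ)*b+(b:ℂ)*c+(c:ℂ)*a)) * Complex.I_sq
    have hB : (-1 + (ε:ℂ)*I)*(b+c) + (1 + (ε:ℂ)*I)*(a+c) + (1 + (ε:ℂ)*I)*(a+b)
        = ((2*a:ℝ) + ((2*ε*(a+b+c) : ℝ):ℂ)*I) := by push_cast; ring
    have hz3eq : 2*((((-2*a - sp)/2 : ℝ):ℂ) + (((-2*ε*(a+b+c) + sm)/2 : ℝ):ℂ)*I)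
        = -((2*a:ℝ) + ((2*ε*(a+b+c) : ℝ):ℂ)*I) - ((sp:ℂ) - (sm:ℂ)*I) := by push_cast; ring
    set z3 : ℂ := (((-2*a - sp)/2 : ℝ):ℂ) + (((-2*ε*(a+b+c) + sm)/2 : ℝ):ℂ)*I with hz3
    set Bc : ℂ := ((2*a:ℝ) + ((2*ε*(a+b+c) : ℝ):ℂ)*I) with hBc
    set w : ℂ := (sp:ℂ) - (sm:ℂ)*I with hwdef
    linear_combination (2*z3 + Bc - w)/4 * hz3eq + (1/4)*hw2 - (1/4)*hD + z3*hB

end Stmt10Aux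


open Stmt10Aux in
/-- If the weighted vertex spanning-tree polynomial of `K₄` (vertices
`{0,1,2,3}`, vertex `3` playing the role of vertex 4) with weights
`w(i,3)=1` and opposite-edge weights `e₁ = w(1,2)`, `e₂ = w(0,2)`,
`e₃ = w(0,1)`, all positive, is real stable, then at least two of
`e₁, e₂, e₃` are equal. -/
theorem stmt_10 (e₁ e₂ e₃ : ℝ) (h₁ : 0 < e₁) (h₂ : 0 < e₂) (h₃ : 0 < e₃)
    (hstab : RealStable (treePoly (⊤ : SimpleGraph (Fin 4))
      (fun e => if e = s(1, 2) then e₁ else if e = s(0, 2) then e₂ else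
        if e = s(0, 1) then e₃ else 1))) :
    e₁ = e₂ ∨ e₂ = e₃ ∨ e₁ = e₃ := by
  by_contra hcon
  push_neg at hcon
  obtain ⟨h12, h23, h13⟩ := hcon
  have hdisj : (e₁-e₂)*(e₁-e₃) < 0 ∨ (e₂-e₁)*(e₂-e₃) < 0 ∨ (e₃-e₁)*(e₃-e₂) < 0 := by
    rcases Ne.lt_or_gt h12 with h|h <;> rcases Ne.lt_or_gt h23 with h'|h' <;>
      rcases Ne.lt_or_gt h13 with h''|h'' <;>
      first
        | (left; nlinarith)
        | (right; left; nlinarith)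
        | (right; right; nlinarith)
  rcases hdisj with hmid | hmid | hmid
  · obtain ⟨z0, z1, z2, z3, hi0, hi1, hi2, hi3, heq⟩ := quad_root e₁ e₂ e₃ h₁ h₂ h₃ hmid
    refine hstab ![z0, z1, z2, z3] ?_ ?_
    · intro i; fin_cases i <;> simpa
    · rw [eval_explicit]
      simp only [Matrix.cons_val_zero, Matrix.cons_val_one, Matrix.head_cons,
        Matrix.cons_val_two, Matrix.cons_val_three, Matrix.tail_cons, Matrix.head_fin_const]
      linear_combination heq
  · obtain ⟨z0, z1, z2, z3, hi0, hi1, hi2, hi3, heq⟩ := quad_root e₂ e₁ e₃ h₂ h₁ h₃ hmid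
    refine hstab ![z1, z0, z2, z3] ?_ ?_
    · intro i; fin_cases i <;> simpa
    · rw [eval_explicit]
      simp only [Matrix.cons_val_zero, Matrix.cons_val_one, Matrix.head_cons,
        Matrix.cons_val_two, Matrix.cons_val_three, Matrix.tail_cons, Matrix.head_fin_const]
      linear_combination heq
  · obtain ⟨z0, z1, z2, z3, hi0, hi1, hi2, hi3, heq⟩ := quad_root e₃ e₁ e₂ h₃ h₁ h₂ hmid
    refine hstab ![z1, z2, z0, z3] ?_ ?_
    · intro i; fin_cases i <;> simpa
    · rw [eval_explicit]
      simp only [Matrix.cons_val_zero, Matrix.cons_val_one, Matrix.head_cons,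
        Matrix.cons_val_two, Matrix.cons_val_three, Matrix.tail_cons, Matrix.head_fin_const]
      linear_combination heq
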